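/- arXiv:1404.6067 — 2 statements merged into one kernel-verified Lean document; each statement's English description precedes it below -/
import Mathlib

section
/- If (X, S^M, S^N) and (Y, T^M, T^N) are waves for a pair (M, N) of matroids on a common ground set, then (X ∪ Y, S^M ∪ (T^M \ X), S^N ∪ (T^N \ X)) is also a wave for (M, N). -/
open Matroid Set

variable {α : Type*}

/-- Deletion of a set from a matroid: restriction to the complement. -/
def Matroid.del (M : Matroid α) (D : Set α) : Matroid α := M ↾ (M.E \ D)

/-- Contraction of a set in a matroid, defined by duality. -/
def Matroid.con (M : Matroid α) (C : Set α) : Matroid α := ((M✶.del C))✶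

/-- A circuit: a minimal dependent set. -/
def IsCircuitOf (M : Matroid α) (C : Set α) : Prop := Minimal M.Dep C

/-- A wave for the pair `(M, N)`: disjoint sets `SM, SN ⊆ X` spanning `X`
in the respective restrictions. -/
def IsWave (M N : Matroid α) (X SM SN : Set α) : Prop :=
  SM ⊆ X ∧ SN ⊆ X ∧ X ⊆ M.E ∧ Disjoint SM SN ∧
  (M ↾ X).Spanning SM ∧ (N ↾ X).Spanning SN

lemma restrict_spanning_iff_cl {M : Matroid α} {S X : Set α} (hSX : S ⊆ X) (hX : X ⊆ M.E) :
    (M ↾ X).Spanning S ↔ X ⊆ M.closure S := by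
  rw [Matroid.spanning_iff_exists_isBase_subset (show S ⊆ (M ↾ X).E from hSX)]
  constructor
  · rintro ⟨B, hB, hBS⟩
    rw [Matroid.isBase_restrict_iff hX] at hB
    exact hB.subset_closure.trans (M.closure_subset_closure hBS)
  · intro h
    obtain ⟨I, hI⟩ := M.exists_isBasis S (hSX.trans hX)
    refine ⟨I, ?_, hI.subset⟩
    rw [Matroid.isBase_restrict_iff hX]
    exact hI.indep.isBasis_of_subset_of_subset_closure (hI.subset.trans hSX)
      (h.trans (by rw [hI.closure_eq_closure]))

lemma join_span {M : Matroid α} {X S Y T : Set α}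
    (hSX : S ⊆ X) (hTY : T ⊆ Y) (hX : X ⊆ M.E) (hY : Y ⊆ M.E)
    (hS : (M ↾ X).Spanning S) (hT : (M ↾ Y).Spanning T) :
    (M ↾ (X ∪ Y)).Spanning (S ∪ (T \ X)) := by
  rw [restrict_spanning_iff_cl hSX hX] at hS
  rw [restrict_spanning_iff_cl hTY hY] at hT
  rw [restrict_spanning_iff_cl (union_subset (hSX.trans subset_union_left)
    (diff_subset.trans (hTY.trans subset_union_right))) (union_subset hX hY)]
  have hXcl : X ⊆ M.closure (S ∪ (T \ X)) :=
    hS.trans (M.closure_subset_closure subset_union_left)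
  refine union_subset hXcl ?_
  refine hT.trans ?_
  refine Matroid.closure_subset_closure_of_subset_closure ?_
  intro e he
  by_cases heX : e ∈ X
  · exact hXcl heX
  · exact M.subset_closure _ (union_subset (hSX.trans hX)
      (diff_subset.trans (hTY.trans hY))) (Or.inr ⟨he, heX⟩)

/-- The join of two waves is a wave. -/
theorem join_of_waves (M N : Matroid α) (hE : M.E = N.E) (hfin : M.E.Finite)
    (X SM SN Y TM TN : Set α)
    (hX : IsWave M N X SM SN) (hY : IsWave M N Y TM TN) :
    IsWave M N (X ∪ Y) (SM ∪ (TM \ X)) (SN ∪ (TN \ X)) := by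
  obtain ⟨hSMX, hSNX, hXE, hdX, hMX, hNX⟩ := hX
  obtain ⟨hTMY, hTNY, hYE, hdY, hMY, hNY⟩ := hY
  refine ⟨union_subset (hSMX.trans subset_union_left)
      (diff_subset.trans (hTMY.trans subset_union_right)),
    union_subset (hSNX.trans subset_union_left)
      (diff_subset.trans (hTNY.trans subset_union_right)),
    union_subset hXE hYE, ?_, ?_, ?_⟩
  · refine disjoint_union_left.2 ⟨disjoint_union_right.2 ⟨hdX, ?_⟩,
      disjoint_union_right.2 ⟨?_, ?_⟩⟩
    · exact disjoint_left.2 fun a ha hb => hb.2 (hSMX ha)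
    · exact disjoint_left.2 fun a ha hb => ha.2 (hSNX hb)
    · exact (hdY.mono diff_subset diff_subset)
  · exact join_span hSMX hTMY hXE hYE hMX hMY
  · exact join_span hSNX hTNY (hXE.trans_eq hE) (hYE.trans_eq hE) hNX hNY
end

section
/- Define a partial order ≥ on the promise set P = {⊥, M_-, M_+, N_-, N_+, ⊤} by: P ≥ Q iff for every arena (pair of finite matroids with a distinguished element e), whenever some wave fulfils P, some wave also fulfils Q. Then ≥ is exactly the partial order generated by the relations ⊤ ≥ M_+, ⊤ ≥ N_+, M_+ ≥ M_-, N_+ ≥ N_-, M_- ≥ ⊥, N_- ≥ ⊥. In particular, M_+ > M_-, N_+ > N_-, each of M_-, M_+ is incomparable to each of N_-, N_+, ⊤ is the maximum and ⊥ the minimum. -/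
open Matroid Set

variable {α : Type*}

/-- The set of promises `{⊥, M₋, M₊, N₋, N₊, ⊤}`. -/
inductive Promise : Type
  | bot | Mm | Mp | Nm | Np | top
  deriving DecidableEq

/-- The partial order on promises generated by `⊤ ≥ M₊ ≥ M₋ ≥ ⊥` and `⊤ ≥ N₊ ≥ N₋ ≥ ⊥`. -/
def ple : Promise → Promise → Prop
  | Promise.bot, _ => True
  | _, Promise.top => True
  | Promise.Mm, Promise.Mm => True
  | Promise.Mm, Promise.Mp => True
  | Promise.Mp, Promise.Mp => True
  | Promise.Nm, Promise.Nm => True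
  | Promise.Nm, Promise.Np => True
  | Promise.Np, Promise.Np => True
  | _, _ => False

/-- Promises and co-promises: `Sum.inl` is a promise, `Sum.inr` a co-promise. -/
abbrev PP := Promise ⊕ Promise

/-- The order on promises and co-promises: the orders on the two copies, with no
comparabilities between promises and co-promises. -/
def pple : PP → PP → Prop
  | Sum.inl p, Sum.inl q => ple p q
  | Sum.inr p, Sum.inr q => ple p q
  | _, _ => False

/-- Up-closed subsets of `PP`. -/
def UpClosed (B : Set PP) : Prop := ∀ x ∈ B, ∀ y, pple x y → y ∈ B

/-- The five possible attainability sets. -/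
def attainSet1 : Set PP := Sum.inl '' Set.univ ∪ {Sum.inr Promise.bot}
def attainSet2 : Set PP := Sum.inr '' Set.univ ∪ {Sum.inl Promise.bot}
def attainSet3 : Set PP :=
  {Sum.inl Promise.bot, Sum.inl Promise.Mm, Sum.inl Promise.Mp,
   Sum.inr Promise.bot, Sum.inr Promise.Nm, Sum.inr Promise.Np}
def attainSet4 : Set PP :=
  {Sum.inl Promise.bot, Sum.inl Promise.Nm, Sum.inl Promise.Np,
   Sum.inr Promise.bot, Sum.inr Promise.Mm, Sum.inr Promise.Mp}
def attainSet5 : Set PP :=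
  {Sum.inl Promise.bot, Sum.inl Promise.Mm, Sum.inl Promise.Nm,
   Sum.inr Promise.bot, Sum.inr Promise.Mm, Sum.inr Promise.Nm}

/-- A set of promises and co-promises is blocking if it meets each of the five
possible attainability sets. -/
def Blocking (B : Set PP) : Prop :=
  (B ∩ attainSet1).Nonempty ∧ (B ∩ attainSet2).Nonempty ∧ (B ∩ attainSet3).Nonempty ∧
  (B ∩ attainSet4).Nonempty ∧ (B ∩ attainSet5).Nonempty

/-- A wave `(W, SM, SN)` fulfils a promise at `e` in the arena given by `(M, N, e)`. -/
def Fulfils (M N : Matroid α) (e : α) (W SM SN : Set α) : Promise → Prop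
  | Promise.bot => True
  | Promise.Mp => e ∉ W ∧ e ∈ M.closure W
  | Promise.Mm => IsWave M N (insert e W) SM (insert e SN)
  | Promise.Np => e ∉ W ∧ e ∈ N.closure W
  | Promise.Nm => IsWave M N (insert e W) (insert e SM) SN
  | Promise.top => e ∉ W ∧ e ∈ M.closure W ∧ e ∈ N.closure W

/-- A promise is attainable in the arena `(M, N, e)` if some wave fulfils it. -/
def Attains (M N : Matroid α) (e : α) (P : Promise) : Prop :=
  ∃ W SM SN, IsWave M N W SM SN ∧ Fulfils M N e W SM SN P

/-- The set of attainable promises (`Sum.inl`) and co-promises (`Sum.inr`,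
attainable by cowaves, i.e. waves of the dual pair) of the arena `(M, N, e)`. -/
def AttainSet (M N : Matroid α) (e : α) : Set PP :=
  fun x => Sum.elim (Attains M N e) (Attains M✶ N✶ e) x


/-! ### Auxiliary lemmas -/

section Aux

variable {M N : Matroid α} {X S W SM SN : Set α} {e : α}

lemma spanning_restrict_iff' (hX : X ⊆ M.E) (hS : S ⊆ X) :
    (M ↾ X).Spanning S ↔ X ⊆ M.closure S := by
  constructor
  · intro h
    obtain ⟨B, hB, hBS⟩ := h.exists_isBase_subset
    rw [Matroid.isBase_restrict_iff hX] at hB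
    exact hB.subset_closure.trans (M.closure_subset_closure_of_subset_closure
      (M.subset_closure_of_subset hBS (hS.trans hX)))
  · intro h
    obtain ⟨I, hI⟩ := M.exists_isBasis S (hS.trans hX)
    have hIX : M.IsBasis I X := hI.indep.isBasis_of_subset_of_subset_closure
      (hI.subset.trans hS) (by rwa [hI.closure_eq_closure])
    rw [Matroid.spanning_iff_exists_isBase_subset (show S ⊆ (M ↾ X).E from hS)]
    exact ⟨I, hIX.restrict_isBase, hI.subset⟩

lemma freeOn_closure' (E X : Set α) : (Matroid.freeOn E).closure X = X ∩ E := by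
  refine subset_antisymm ?_ ?_
  · intro x hx
    have hxE : x ∈ E := (Matroid.freeOn E).closure_subset_ground X hx
    rw [← Matroid.closure_inter_ground, Matroid.freeOn_ground] at hx
    have hI : (Matroid.freeOn E).Indep (X ∩ E) :=
      Matroid.freeOn_indep_iff.2 inter_subset_right
    rw [hI.mem_closure_iff] at hx
    rcases hx with h | h
    · exact absurd (Matroid.freeOn_indep_iff.2 (insert_subset hxE inter_subset_right))
        h.not_indep
    · exact h
  · rw [← Matroid.closure_inter_ground]
    exact (Matroid.freeOn E).subset_closure (X ∩ E)
      (show X ∩ E ⊆ (Matroid.freeOn E).E from inter_subset_right)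

lemma loopyOn_closure' (E X : Set α) : (Matroid.loopyOn E).closure X = E := by
  have h : (Matroid.loopyOn E).Spanning ∅ :=
    (Matroid.loopyOn_isBase_iff.2 rfl).spanning
  refine subset_antisymm ((Matroid.loopyOn E).closure_subset_ground X) ?_
  have h2 := h.closure_eq
  rw [Matroid.loopyOn_ground] at h2
  have h3 := (Matroid.loopyOn E).closure_subset_closure (empty_subset X)
  rw [h2] at h3
  exact h3

lemma isWave_empty (M N : Matroid α) : IsWave M N ∅ ∅ ∅ :=
  ⟨Subset.rfl, Subset.rfl, empty_subset _, disjoint_empty _,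
    (spanning_restrict_iff' (empty_subset _) Subset.rfl).2 (empty_subset _),
    (spanning_restrict_iff' (empty_subset _) Subset.rfl).2 (empty_subset _)⟩

lemma attains_bot (M N : Matroid α) (e : α) : Attains M N e Promise.bot :=
  ⟨∅, ∅, ∅, isWave_empty M N, trivial⟩

lemma attains_top_mp (h : Attains M N e Promise.top) : Attains M N e Promise.Mp := by
  obtain ⟨W, SM, SN, hw, h1, h2, h3⟩ := h
  exact ⟨W, SM, SN, hw, h1, h2⟩

lemma attains_top_np (h : Attains M N e Promise.top) : Attains M N e Promise.Np := by
  obtain ⟨W, SM, SN, hw, h1, h2, h3⟩ := h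
  exact ⟨W, SM, SN, hw, h1, h3⟩

lemma attains_mp_mm (hE : M.E = N.E) (h : Attains M N e Promise.Mp) :
    Attains M N e Promise.Mm := by
  obtain ⟨W, SM, SN, hw, heW, hecl⟩ := h
  obtain ⟨hSM, hSN, hWE, hdj, hspM, hspN⟩ := hw
  have heE : e ∈ M.E := M.closure_subset_ground W hecl
  have hWME : insert e W ⊆ M.E := insert_subset heE hWE
  have hWNE : W ⊆ N.E := hE ▸ hWE
  have hMcl : W ⊆ M.closure SM := (spanning_restrict_iff' hWE hSM).1 hspM
  have hNcl : W ⊆ N.closure SN := (spanning_restrict_iff' hWNE hSN).1 hspN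
  refine ⟨W, SM, SN, ⟨hSM, hSN, hWE, hdj, hspM, hspN⟩,
    hSM.trans (subset_insert _ _), insert_subset_insert hSN, hWME, ?_, ?_, ?_⟩
  · rw [Set.disjoint_right]
    rintro x hx
    rw [Set.mem_insert_iff] at hx
    rcases hx with rfl | hx
    · exact fun h => heW (hSM h)
    · exact fun h => hdj.ne_of_mem h hx rfl
  · rw [spanning_restrict_iff' hWME (hSM.trans (subset_insert _ _))]
    exact insert_subset (M.closure_subset_closure_of_subset_closure hMcl hecl) hMcl
  · rw [spanning_restrict_iff' (hE ▸ hWME) (insert_subset_insert hSN)]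
    refine insert_subset ?_ (hNcl.trans (N.closure_subset_closure (subset_insert _ _)))
    exact N.subset_closure (insert e SN)
      (insert_subset (hE ▸ heE) (hSN.trans hWNE)) (mem_insert _ _)

lemma attains_np_nm (hE : M.E = N.E) (h : Attains M N e Promise.Np) :
    Attains M N e Promise.Nm := by
  obtain ⟨W, SM, SN, hw, heW, hecl⟩ := h
  obtain ⟨hSM, hSN, hWE, hdj, hspM, hspN⟩ := hw
  have heE : e ∈ N.E := N.closure_subset_ground W hecl
  have heME : e ∈ M.E := hE ▸ heE
  have hWME : insert e W ⊆ M.E := insert_subset heME hWE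
  have hWNE : W ⊆ N.E := hE ▸ hWE
  have hMcl : W ⊆ M.closure SM := (spanning_restrict_iff' hWE hSM).1 hspM
  have hNcl : W ⊆ N.closure SN := (spanning_restrict_iff' hWNE hSN).1 hspN
  refine ⟨W, SM, SN, ⟨hSM, hSN, hWE, hdj, hspM, hspN⟩,
    insert_subset_insert hSM, hSN.trans (subset_insert _ _), hWME, ?_, ?_, ?_⟩
  · rw [Set.disjoint_left]
    rintro x hx
    rw [Set.mem_insert_iff] at hx
    rcases hx with rfl | hx
    · exact fun h => heW (hSN h)
    · exact fun h => hdj.ne_of_mem hx h rfl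
  · rw [spanning_restrict_iff' hWME (insert_subset_insert hSM)]
    refine insert_subset ?_ (hMcl.trans (M.closure_subset_closure (subset_insert _ _)))
    exact M.subset_closure (insert e SM)
      (insert_subset heME (hSM.trans hWE)) (mem_insert _ _)
  · rw [spanning_restrict_iff' (hE ▸ hWME) (hSN.trans (subset_insert _ _))]
    exact insert_subset (N.closure_subset_closure_of_subset_closure hNcl hecl) hNcl

/-! ### Counterexample arenas -/

variable {a b : α}

/-- If `N` is free, `N₊` (and hence `⊤`) is unattainable. -/
lemma not_attains_np_freeN (M : Matroid α) (a : α) :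
    ¬ Attains M (Matroid.freeOn {a}) a Promise.Np := by
  rintro ⟨W, SM, SN, hw, heW, hecl⟩
  rw [freeOn_closure'] at hecl
  exact heW hecl.1

lemma not_attains_top_freeN (M : Matroid α) (a : α) :
    ¬ Attains M (Matroid.freeOn {a}) a Promise.top := by
  rintro ⟨W, SM, SN, hw, heW, _, hecl⟩
  rw [freeOn_closure'] at hecl
  exact heW hecl.1

lemma not_attains_mp_freeM (N : Matroid α) (a : α) :
    ¬ Attains (Matroid.freeOn {a}) N a Promise.Mp := by
  rintro ⟨W, SM, SN, hw, heW, hecl⟩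
  rw [freeOn_closure'] at hecl
  exact heW hecl.1

lemma not_attains_top_freeM (N : Matroid α) (a : α) :
    ¬ Attains (Matroid.freeOn {a}) N a Promise.top := by
  rintro ⟨W, SM, SN, hw, heW, hecl, _⟩
  rw [freeOn_closure'] at hecl
  exact heW hecl.1

lemma not_attains_mm_freeM (N : Matroid α) (a : α) :
    ¬ Attains (Matroid.freeOn {a}) N a Promise.Mm := by
  rintro ⟨W, SM, SN, hw, hSM, hSN, hWE, hdj, hspM, hspN⟩
  have haSM : a ∈ SM := by
    have h1 : insert a W ⊆ (Matroid.freeOn {a} : Matroid α).E := hWE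
    have h2 := (spanning_restrict_iff' h1 hSM).1 hspM
    have := h2 (mem_insert a W)
    rw [freeOn_closure'] at this
    exact this.1
  exact hdj.ne_of_mem haSM (mem_insert a SN) rfl

lemma not_attains_nm_freeN (M : Matroid α) (a : α) (hME : M.E = {a}) :
    ¬ Attains M (Matroid.freeOn {a}) a Promise.Nm := by
  rintro ⟨W, SM, SN, hw, hSM, hSN, hWE, hdj, hspM, hspN⟩
  have hWE' : insert a W ⊆ ({a} : Set α) := hME ▸ hWE
  have haSN : a ∈ SN := by
    have h2 := (spanning_restrict_iff'
      (show insert a W ⊆ (Matroid.freeOn {a} : Matroid α).E from hWE') hSN).1 hspN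
    have := h2 (mem_insert a W)
    rw [freeOn_closure'] at this
    exact this.1
  exact hdj.ne_of_mem (mem_insert a SM) haSN rfl

lemma attains_mp_loopyM (a : α) :
    Attains (Matroid.loopyOn {a}) (Matroid.freeOn {a}) a Promise.Mp :=
  ⟨∅, ∅, ∅, isWave_empty _ _, notMem_empty a, by
    rw [loopyOn_closure']; exact mem_singleton a⟩

lemma attains_np_loopyN (a : α) :
    Attains (Matroid.freeOn {a}) (Matroid.loopyOn {a}) a Promise.Np :=
  ⟨∅, ∅, ∅, isWave_empty _ _, notMem_empty a, by
    rw [loopyOn_closure']; exact mem_singleton a⟩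

/-! ### The parallel-pair arena -/

/-- The parallel pair on `{a, b}` : the rank-one matroid in which `a, b` are parallel. -/
noncomputable def parPair (a b : α) : Matroid α :=
  letI := Classical.decEq α
  (Matroid.freeOn {a}).comap (fun x => if x = b then a else x)

lemma parPair_ground (hab : a ≠ b) : (parPair a b).E = {a, b} := by
  letI := Classical.decEq α
  ext x
  simp only [parPair, Matroid.comap_ground_eq, Matroid.freeOn_ground, mem_preimage,
    mem_singleton_iff, mem_insert_iff]
  by_cases hx : x = b
  · simp [hx, if_pos rfl]
  · simp [if_neg hx, hx]

lemma parPair_indep_singleton_a (hab : a ≠ b) : (parPair a b).Indep {a} := by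
  letI := Classical.decEq α
  refine ⟨Matroid.freeOn_indep_iff.2 ?_, Set.injOn_singleton _ _⟩
  rw [image_singleton]
  simp [ite_self]

lemma parPair_indep_singleton_b (hab : a ≠ b) : (parPair a b).Indep {b} := by
  letI := Classical.decEq α
  refine ⟨Matroid.freeOn_indep_iff.2 ?_, Set.injOn_singleton _ _⟩
  rw [image_singleton]
  simp [if_pos rfl]

lemma parPair_indep_empty (hab : a ≠ b) : (parPair a b).Indep ∅ := by
  refine ⟨?_, Set.injOn_empty _⟩
  rw [image_empty]
  exact Matroid.freeOn_indep_iff.2 (empty_subset _)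

lemma parPair_dep_pair (hab : a ≠ b) : (parPair a b).Dep {a, b} := by
  rw [Matroid.dep_iff, parPair_ground hab]
  letI := Classical.decEq α
  refine ⟨fun h => ?_, Subset.rfl⟩
  obtain ⟨-, h2⟩ := h
  have := h2 (mem_insert a {b}) (mem_insert_of_mem a rfl)
    (by simp)
  exact hab this

lemma parPair_mem_closure_ab (hab : a ≠ b) : a ∈ (parPair a b).closure {b} := by
  rw [(parPair_indep_singleton_b hab).mem_closure_iff_of_notMem (by simpa using hab)]
  exact parPair_dep_pair hab

lemma parPair_mem_closure_ba (hab : a ≠ b) : b ∈ (parPair a b).closure {a} := by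
  rw [(parPair_indep_singleton_a hab).mem_closure_iff_of_notMem
    (by simpa using Ne.symm hab)]
  rw [Set.pair_comm b a]
  exact parPair_dep_pair hab

lemma parPair_not_mem_closure_empty (hab : a ≠ b) (x : α) (hx : x = a ∨ x = b) :
    x ∉ (parPair a b).closure ∅ := by
  rw [(parPair_indep_empty hab).mem_closure_iff]
  rintro (h | h)
  · rcases hx with rfl | rfl
    · exact h.not_indep (by simpa using parPair_indep_singleton_a hab)
    · exact h.not_indep (by simpa using parPair_indep_singleton_b hab)
  · exact h

/-- In the parallel-pair arena, no wave puts `a` in the closure of a set avoiding `a`. -/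
lemma parPair_no_span (hab : a ≠ b) {W SM SN : Set α}
    (hw : IsWave (parPair a b) (parPair a b) W SM SN) (haW : a ∉ W)
    (hacl : a ∈ (parPair a b).closure W) : False := by
  obtain ⟨hSM, hSN, hWE, hdj, hspM, hspN⟩ := hw
  rw [parPair_ground hab] at hWE
  have hWb : W ⊆ {b} := fun x hx => by
    rcases hWE hx with rfl | h
    · exact absurd hx haW
    · exact h
  have hbW : b ∈ W := by
    by_contra hbW
    have hW : W = ∅ := by
      rw [eq_empty_iff_forall_notMem]
      intro x hx
      exact hbW ((hWb hx) ▸ hx)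
    rw [hW] at hacl
    exact parPair_not_mem_closure_empty hab a (Or.inl rfl) hacl
  have hWeq : W = {b} := subset_antisymm hWb (singleton_subset_iff.2 hbW)
  subst hWeq
  have hWE' : ({b} : Set α) ⊆ (parPair a b).E := by
    rw [parPair_ground hab]; exact fun x hx => Or.inr hx
  have hM := (spanning_restrict_iff' hWE' hSM).1 hspM
  have hN := (spanning_restrict_iff' hWE' hSN).1 hspN
  have hbSM : b ∈ SM := by
    by_contra hbSM
    have : SM = ∅ := by
      rw [eq_empty_iff_forall_notMem]
      intro x hx
      exact hbSM ((hSM hx) ▸ hx)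
    rw [this] at hM
    exact parPair_not_mem_closure_empty hab b (Or.inr rfl) (hM rfl)
  have hbSN : b ∈ SN := by
    by_contra hbSN
    have : SN = ∅ := by
      rw [eq_empty_iff_forall_notMem]
      intro x hx
      exact hbSN ((hSN hx) ▸ hx)
    rw [this] at hN
    exact parPair_not_mem_closure_empty hab b (Or.inr rfl) (hN rfl)
  exact hdj.ne_of_mem hbSM hbSN rfl

lemma not_attains_mp_parPair (hab : a ≠ b) :
    ¬ Attains (parPair a b) (parPair a b) a Promise.Mp := by
  rintro ⟨W, SM, SN, hw, haW, hacl⟩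
  exact parPair_no_span hab hw haW hacl

lemma not_attains_np_parPair (hab : a ≠ b) :
    ¬ Attains (parPair a b) (parPair a b) a Promise.Np := by
  rintro ⟨W, SM, SN, hw, haW, hacl⟩
  exact parPair_no_span hab hw haW hacl

lemma not_attains_top_parPair (hab : a ≠ b) :
    ¬ Attains (parPair a b) (parPair a b) a Promise.top := by
  rintro ⟨W, SM, SN, hw, haW, hacl, -⟩
  exact parPair_no_span hab hw haW hacl

lemma parPair_big_wave (hab : a ≠ b) :
    IsWave (parPair a b) (parPair a b) {a, b} {b} {a} := by
  have hE : ({a, b} : Set α) ⊆ (parPair a b).E := (parPair_ground hab).symm ▸ Subset.rfl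
  have hsubb : ({b} : Set α) ⊆ {a, b} := fun x hx => Or.inr hx
  have hsuba : ({a} : Set α) ⊆ {a, b} := fun x hx => Or.inl hx
  refine ⟨hsubb, hsuba, hE, ?_, ?_, ?_⟩
  · exact disjoint_singleton.2 (Ne.symm hab)
  · rw [spanning_restrict_iff' hE hsubb]
    refine insert_subset (parPair_mem_closure_ab hab) ?_
    exact singleton_subset_iff.2 ((parPair a b).subset_closure {b}
      (hsubb.trans hE) rfl)
  · rw [spanning_restrict_iff' hE hsuba]
    rw [Set.pair_comm]
    refine insert_subset (parPair_mem_closure_ba hab) ?_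
    exact singleton_subset_iff.2 ((parPair a b).subset_closure {a}
      (hsuba.trans hE) rfl)

lemma parPair_big_wave' (hab : a ≠ b) :
    IsWave (parPair a b) (parPair a b) {a, b} {a} {b} := by
  obtain ⟨h1, h2, h3, h4, h5, h6⟩ := parPair_big_wave hab
  exact ⟨h2, h1, h3, h4.symm, h6, h5⟩

lemma attains_mm_parPair (hab : a ≠ b) :
    Attains (parPair a b) (parPair a b) a Promise.Mm := by
  refine ⟨{a, b}, {b}, {a}, parPair_big_wave hab, ?_⟩
  show IsWave _ _ (insert a {a, b}) {b} (insert a {a})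
  rw [Set.insert_eq_self.2 (mem_insert a {b}), Set.pair_eq_singleton]
  exact parPair_big_wave hab

lemma attains_nm_parPair (hab : a ≠ b) :
    Attains (parPair a b) (parPair a b) a Promise.Nm := by
  refine ⟨{a, b}, {a}, {b}, parPair_big_wave' hab, ?_⟩
  show IsWave _ _ (insert a {a, b}) (insert a {a}) {b}
  rw [Set.insert_eq_self.2 (mem_insert a {b}), Set.pair_eq_singleton]
  exact parPair_big_wave' hab

lemma reverse_aux {P Q : Promise} {a b : α} (hab : a ≠ b)
    (h : ∀ (M N : Matroid α) (e : α),
      M.E = N.E → M.E.Finite → e ∈ M.E → Attains M N e P → Attains M N e Q) :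
    ple Q P := by
  have hfin1 : (Matroid.freeOn {a} : Matroid α).E.Finite := by
    rw [Matroid.freeOn_ground]; exact finite_singleton a
  have hfin1' : (Matroid.loopyOn {a} : Matroid α).E.Finite := by
    rw [Matroid.loopyOn_ground]; exact finite_singleton a
  have hfinC : (parPair a b).E.Finite := by
    rw [parPair_ground hab]; exact (finite_singleton b).insert a
  have hmem1 : a ∈ (Matroid.freeOn {a} : Matroid α).E := by
    rw [Matroid.freeOn_ground]; exact mem_singleton a
  have hmem1' : a ∈ (Matroid.loopyOn {a} : Matroid α).E := by
    rw [Matroid.loopyOn_ground]; exact mem_singleton a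
  have hmemC : a ∈ (parPair a b).E := by
    rw [parPair_ground hab]; exact mem_insert a _
  have hE1 : (Matroid.loopyOn {a} : Matroid α).E = (Matroid.freeOn {a} : Matroid α).E := by
    rw [Matroid.loopyOn_ground, Matroid.freeOn_ground]
  have hE1' : (Matroid.freeOn {a} : Matroid α).E = (Matroid.loopyOn {a} : Matroid α).E :=
    hE1.symm
  have hA1mp := attains_mp_loopyM (α := α) a
  have hA1mm := attains_mp_mm hE1 hA1mp
  have hA1np := attains_np_loopyN (α := α) a
  have hA1nm := attains_np_nm hE1' hA1np
  cases P <;> cases Q <;> try trivial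
  -- P = bot
  · exact absurd (h _ _ a rfl hfin1 hmem1 (attains_bot _ _ _)) (not_attains_mm_freeM _ a)
  · exact absurd (h _ _ a rfl hfin1 hmem1 (attains_bot _ _ _)) (not_attains_mp_freeM _ a)
  · exact absurd (h _ _ a rfl hfin1 hmem1 (attains_bot _ _ _))
      (not_attains_nm_freeN (Matroid.freeOn {a}) a (by rw [Matroid.freeOn_ground]))
  · exact absurd (h _ _ a rfl hfin1 hmem1 (attains_bot _ _ _)) (not_attains_np_freeN _ a)
  · exact absurd (h _ _ a rfl hfin1 hmem1 (attains_bot _ _ _)) (not_attains_top_freeM _ a)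
  -- P = Mm
  · exact absurd (h _ _ a rfl hfinC hmemC (attains_mm_parPair hab))
      (not_attains_mp_parPair hab)
  · exact absurd (h _ _ a hE1 hfin1' hmem1' hA1mm)
      (not_attains_nm_freeN (Matroid.loopyOn {a}) a (by rw [Matroid.loopyOn_ground]))
  · exact absurd (h _ _ a hE1 hfin1' hmem1' hA1mm) (not_attains_np_freeN _ a)
  · exact absurd (h _ _ a hE1 hfin1' hmem1' hA1mm) (not_attains_top_freeN _ a)
  -- P = Mp
  · exact absurd (h _ _ a hE1 hfin1' hmem1' hA1mp)
      (not_attains_nm_freeN (Matroid.loopyOn {a}) a (by rw [Matroid.loopyOn_ground]))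
  · exact absurd (h _ _ a hE1 hfin1' hmem1' hA1mp) (not_attains_np_freeN _ a)
  · exact absurd (h _ _ a hE1 hfin1' hmem1' hA1mp) (not_attains_top_freeN _ a)
  -- P = Nm
  · exact absurd (h _ _ a hE1' hfin1 hmem1 hA1nm) (not_attains_mm_freeM _ a)
  · exact absurd (h _ _ a hE1' hfin1 hmem1 hA1nm) (not_attains_mp_freeM _ a)
  · exact absurd (h _ _ a rfl hfinC hmemC (attains_nm_parPair hab))
      (not_attains_np_parPair hab)
  · exact absurd (h _ _ a hE1' hfin1 hmem1 hA1nm) (not_attains_top_freeM _ a)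
  -- P = Np
  · exact absurd (h _ _ a hE1' hfin1 hmem1 hA1np) (not_attains_mm_freeM _ a)
  · exact absurd (h _ _ a hE1' hfin1 hmem1 hA1np) (not_attains_mp_freeM _ a)
  · exact absurd (h _ _ a hE1' hfin1 hmem1 hA1np) (not_attains_top_freeM _ a)


end Aux

universe u

/-- The domination order on promises: `P ≥ Q` iff in every finite arena, whenever
some wave fulfils `P`, some wave also fulfils `Q`. -/
def PromiseGe (P Q : Promise) : Prop :=
  ∀ (β : Type u) (M N : Matroid β) (e : β),
    M.E = N.E → M.E.Finite → e ∈ M.E → Attains M N e P → Attains M N e Q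

/-- The domination order on promises is exactly the partial order generated by
`⊤ ≥ M₊ ≥ M₋ ≥ ⊥` and `⊤ ≥ N₊ ≥ N₋ ≥ ⊥`. -/
theorem promiseGe_iff_ple (P Q : Promise) : PromiseGe.{u} P Q ↔ ple Q P := by
  constructor
  · intro h
    have hab : (ULift.up false : ULift.{u} Bool) ≠ ULift.up true := by
      intro hcon
      exact Bool.false_ne_true (congrArg ULift.down hcon)
    exact reverse_aux hab (fun M N e => h _ M N e)
  · intro hple β M N e hE hfin he hatt
    cases P <;> cases Q <;>
      first
        | exact attains_bot M N e
        | exact hatt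
        | exact attains_mp_mm hE hatt
        | exact attains_np_nm hE hatt
        | exact attains_top_mp hatt
        | exact attains_top_np hatt
        | exact attains_mp_mm hE (attains_top_mp hatt)
        | exact attains_np_nm hE (attains_top_np hatt)
        | exact False.elim hple
end
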